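/- For ℰ, ℰ' i.i.d. standard exponentials, ℰ_t = (ℰ−1) − t(ℰ'−1), and 0 ≤ t ≤ 1, one has E|ℰ_t|³ = 2·(6e^{t-1}/(1+t) + t³ − 1). -/

import Mathlib

open MeasureTheory ProbabilityTheory Real Set Filter
open scoped ENNReal
set_option maxHeartbeats 1000000

/-- Density of a standard exponential random variable. -/
noncomputable def expPDF : ℝ → ℝ := fun x => if 0 < x then Real.exp (-x) else 0

/-- `X` has density `f` with respect to Lebesgue measure. -/
def HasDensity {Ω : Type*} [MeasurableSpace Ω] (P : Measure Ω) (X : Ω → ℝ) (f : ℝ → ℝ) : Prop :=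
  Measurable X ∧ Measure.map X P = volume.withDensity (fun x => ENNReal.ofReal (f x))

lemma hd_exp (x : ℝ) : HasDerivAt (fun y : ℝ => Real.exp (-y)) (-Real.exp (-x)) x := by
  simpa using (hasDerivAt_neg x).exp

lemma tendsto_poly_exp (a b c d : ℝ) :
    Tendsto (fun y : ℝ => (a + b*y + c*y^2 + d*y^3) * Real.exp (-y)) atTop (nhds 0) := by
  have h : ∀ n : ℕ, Tendsto (fun y : ℝ => y^n * Real.exp (-y)) atTop (nhds 0) :=
    fun n => tendsto_pow_mul_exp_neg_atTop_nhds_zero n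
  have := (((h 0).const_mul a).add ((h 1).const_mul b)).add
    (((h 2).const_mul c).add ((h 3).const_mul d))
  convert this using 2 with y
  · ring
  · norm_num

lemma hd_poly_exp (a b c d x : ℝ) :
    HasDerivAt (fun y : ℝ =>
      -(((a+b+2*c+6*d) + (b+2*c+6*d)*y + (c+3*d)*y^2 + d*y^3) * Real.exp (-y)))
      ((a + b*x + c*x^2 + d*x^3) * Real.exp (-x)) x := by
  have hq : HasDerivAt (fun y : ℝ => (a+b+2*c+6*d) + (b+2*c+6*d)*y + (c+3*d)*y^2 + d*y^3)
      ((b+2*c+6*d) + 2*(c+3*d)*x + 3*d*x^2) x := by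
    have h1 : HasDerivAt (fun y : ℝ => y) 1 x := hasDerivAt_id x
    have h2 := hasDerivAt_pow 2 x
    have h3 := hasDerivAt_pow 3 x
    have := ((hasDerivAt_const x (a+b+2*c+6*d)).add (h1.const_mul (b+2*c+6*d))).add
      ((h2.const_mul (c+3*d)).add (h3.const_mul d))
    refine (this.congr_deriv ?_).congr_of_eventuallyEq (Filter.Eventually.of_forall fun y => ?_)
    · push_cast; ring
    · simp only [Pi.add_apply]; ring
  have := (hq.mul (hd_exp x)).neg
  exact this.congr_deriv (by ring)

lemma integrableOn_poly_exp (a b c d r : ℝ) (hr : 0 ≤ r) :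
    IntegrableOn (fun y : ℝ => (a + b*y + c*y^2 + d*y^3) * Real.exp (-y)) (Ioi r) := by
  have key : ∀ a' b' c' d' : ℝ, (∀ y ∈ Ioi r, 0 ≤ a' + b'*y + c'*y^2 + d'*y^3) →
      IntegrableOn (fun y : ℝ => (a' + b'*y + c'*y^2 + d'*y^3) * Real.exp (-y)) (Ioi r) := by
    intro a' b' c' d' hnn
    refine integrableOn_Ioi_deriv_of_nonneg (l := 0) ?_ (fun x _ => hd_poly_exp a' b' c' d' x)
      (fun x hx => mul_nonneg (hnn x hx) (Real.exp_nonneg _)) ?_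
    · exact (Continuous.continuousWithinAt (by fun_prop))
    · simpa using (tendsto_poly_exp (a'+b'+2*c'+6*d') (b'+2*c'+6*d') (c'+3*d') d').neg
  have h0 := key 1 0 0 0 (by intro y hy; norm_num)
  have h1 := key 0 1 0 0 (by intro y hy; simp only [mem_Ioi] at hy; nlinarith)
  have h2 := key 0 0 1 0 (by intro y hy; simp only [mem_Ioi] at hy; nlinarith)
  have h3 := key 0 0 0 1 (by intro y hy; simp only [mem_Ioi] at hy; nlinarith)
  have := (((h0.const_mul a).add (h1.const_mul b)).add
    ((h2.const_mul c).add (h3.const_mul d)))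
  exact this.congr (ae_of_all _ fun y => by simp only [Pi.add_apply]; ring)

lemma integral_poly_exp (a b c d r : ℝ) (hr : 0 ≤ r) :
    ∫ y in Ioi r, (a + b*y + c*y^2 + d*y^3) * Real.exp (-y) =
      ((a+b+2*c+6*d) + (b+2*c+6*d)*r + (c+3*d)*r^2 + d*r^3) * Real.exp (-r) := by
  have := integral_Ioi_of_hasDerivAt_of_tendsto
    (f := fun y : ℝ => -(((a+b+2*c+6*d) + (b+2*c+6*d)*y + (c+3*d)*y^2 + d*y^3) * Real.exp (-y)))
    (f' := fun y : ℝ => (a + b*y + c*y^2 + d*y^3) * Real.exp (-y)) (m := 0)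
    (Continuous.continuousWithinAt (by fun_prop))
    (fun x _ => hd_poly_exp a b c d x)
    (integrableOn_poly_exp a b c d r hr)
    (by simpa using (tendsto_poly_exp (a+b+2*c+6*d) (b+2*c+6*d) (c+3*d) d).neg)
  rw [this]; ring

lemma integrableOn_exp_scale (k : ℝ) (hk : 0 < k) :
    IntegrableOn (fun y : ℝ => Real.exp (-(k*y))) (Ioi (0:ℝ)) := by
  have := exp_neg_integrableOn_Ioi 0 hk
  exact this.congr (ae_of_all _ fun y => by simp [neg_mul])

lemma integral_exp_scale (k : ℝ) (hk : 0 < k) :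
    ∫ y in Ioi (0:ℝ), Real.exp (-(k*y)) = 1/k := by
  have hderiv : ∀ x ∈ Ioi (0:ℝ), HasDerivAt (fun y : ℝ => -(Real.exp (-(k*y))/k))
      (Real.exp (-(k*x))) x := by
    intro x _
    have h1 : HasDerivAt (fun y : ℝ => -(k*y)) (-k) x := by
      exact (((hasDerivAt_id' x).const_mul k).neg).congr_deriv (by ring)
    have := (((Real.hasDerivAt_exp (-(k*x))).comp x h1).div_const k).neg
    have hk' : k ≠ 0 := hk.ne'
    refine this.congr_deriv ?_
    field_simp
  have htend : Tendsto (fun y : ℝ => -(Real.exp (-(k*y))/k)) atTop (nhds 0) := by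
    have h2 : Tendsto (fun y : ℝ => -(k*y)) atTop atBot :=
      tendsto_neg_atTop_atBot.comp (Tendsto.const_mul_atTop hk tendsto_id)
    have := ((Real.tendsto_exp_atBot.comp h2).div_const k).neg
    simpa using this
  have := integral_Ioi_of_hasDerivAt_of_tendsto
    (Continuous.continuousWithinAt (by fun_prop)) hderiv (integrableOn_exp_scale k hk) htend
  rw [this]; simp

lemma inner_integrable (c : ℝ) (hc : 0 ≤ c) :
    IntegrableOn (fun x : ℝ => |x - c|^3 * Real.exp (-x)) (Ioi 0) := by
  have h1 : IntegrableOn (fun x : ℝ => |x - c|^3 * Real.exp (-x)) (Ioc 0 c) := by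
    refine ((integrableOn_poly_exp (c^3) (-3*c^2) (3*c) (-1) 0 le_rfl).mono_set
      Ioc_subset_Ioi_self).congr_fun ?_ measurableSet_Ioc
    intro x hx
    have : |x - c| = -(x - c) := abs_of_nonpos (by linarith [hx.2])
    simp only [this]; ring
  have h2 : IntegrableOn (fun x : ℝ => |x - c|^3 * Real.exp (-x)) (Ioi c) := by
    refine (integrableOn_poly_exp (-c^3) (3*c^2) (-3*c) 1 c hc).congr_fun ?_ measurableSet_Ioi
    intro x hx
    have : |x - c| = x - c := abs_of_nonneg (by simp only [mem_Ioi] at hx; linarith)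
    simp only [this]; ring
  have := h1.union h2
  rwa [Ioc_union_Ioi_eq_Ioi hc] at this

lemma inner_value (c : ℝ) (hc : 0 ≤ c) :
    ∫ x in Ioi 0, |x - c|^3 * Real.exp (-x) =
      c^3 - 3*c^2 + 6*c - 6 + 12 * Real.exp (-c) := by
  have hp1i0 := integrableOn_poly_exp (c^3) (-3*c^2) (3*c) (-1) 0 le_rfl
  have hp1ic := integrableOn_poly_exp (c^3) (-3*c^2) (3*c) (-1) c hc
  have hv10 := integral_poly_exp (c^3) (-3*c^2) (3*c) (-1) 0 le_rfl
  have hv1c := integral_poly_exp (c^3) (-3*c^2) (3*c) (-1) c hc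
  have hv2c := integral_poly_exp (-c^3) (3*c^2) (-3*c) 1 c hc
  -- split the p1 integral
  have hsplit := setIntegral_union (Ioc_disjoint_Ioi (le_refl c)) measurableSet_Ioi
    (hp1i0.mono_set Ioc_subset_Ioi_self) hp1ic
    (f := fun x : ℝ => (c^3 + (-3*c^2)*x + (3*c)*x^2 + (-1)*x^3) * Real.exp (-x))
  rw [Ioc_union_Ioi_eq_Ioi hc] at hsplit
  have hIoc : ∫ x in Ioc 0 c, (c^3 + (-3*c^2)*x + (3*c)*x^2 + (-1)*x^3) * Real.exp (-x)
      = (c^3 - 3*c^2 + 6*c - 6) + 6 * Real.exp (-c) := by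
    have h0 : ∫ x in Ioi 0, (c^3 + (-3*c^2)*x + (3*c)*x^2 + (-1)*x^3) * Real.exp (-x)
        = c^3 - 3*c^2 + 6*c - 6 := by rw [hv10]; norm_num; ring
    have h1 : ∫ x in Ioi c, (c^3 + (-3*c^2)*x + (3*c)*x^2 + (-1)*x^3) * Real.exp (-x)
        = -6 * Real.exp (-c) := by rw [hv1c]; ring
    rw [h0, h1] at hsplit
    linarith
  -- now the absolute-value integral
  rw [← Ioc_union_Ioi_eq_Ioi hc]
  rw [setIntegral_union (Ioc_disjoint_Ioi (le_refl c)) measurableSet_Ioi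
    ((inner_integrable c hc).mono_set Ioc_subset_Ioi_self)
    ((inner_integrable c hc).mono_set (Ioi_subset_Ioi hc))]
  have e1 : ∫ x in Ioc 0 c, |x - c|^3 * Real.exp (-x)
      = ∫ x in Ioc 0 c, (c^3 + (-3*c^2)*x + (3*c)*x^2 + (-1)*x^3) * Real.exp (-x) := by
    refine setIntegral_congr_fun measurableSet_Ioc fun x hx => ?_
    have : |x - c| = -(x - c) := abs_of_nonpos (by linarith [hx.2])
    simp only [this]; ring
  have e2 : ∫ x in Ioi c, |x - c|^3 * Real.exp (-x)
      = ∫ x in Ioi c, (-c^3 + (3*c^2)*x + (-3*c)*x^2 + 1*x^3) * Real.exp (-x) := by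
    refine setIntegral_congr_fun measurableSet_Ioi fun x hx => ?_
    have : |x - c| = x - c := abs_of_nonneg (by simp only [mem_Ioi] at hx; linarith)
    simp only [this]; ring
  rw [e1, e2, hIoc, hv2c]
  ring

lemma outer_pointwise (t y : ℝ) :
    ((1-t+t*y)^3 - 3*(1-t+t*y)^2 + 6*(1-t+t*y) - 6 + 12*Real.exp (-(1-t+t*y))) * Real.exp (-y)
    = (((1-t)^3-3*(1-t)^2+6*(1-t)-6) + (t*(3*(1-t)^2-6*(1-t)+6))*y
        + (t^2*(3*(1-t)-3))*y^2 + t^3*y^3) * Real.exp (-y)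
      + 12*Real.exp (t-1) * Real.exp (-((1+t)*y)) := by
  have hexp : Real.exp (t-1) * Real.exp (-((1+t)*y)) = Real.exp (-(1-t+t*y)) * Real.exp (-y) := by
    rw [← Real.exp_add, ← Real.exp_add]; congr 1; ring
  linear_combination (-12:ℝ) * hexp

lemma outer_integrable (t : ℝ) (ht0 : 0 ≤ t) :
    IntegrableOn (fun y : ℝ =>
      ((1-t+t*y)^3 - 3*(1-t+t*y)^2 + 6*(1-t+t*y) - 6 + 12*Real.exp (-(1-t+t*y))) * Real.exp (-y))
      (Ioi 0) := by
  have h1 := integrableOn_poly_exp ((1-t)^3-3*(1-t)^2+6*(1-t)-6) (t*(3*(1-t)^2-6*(1-t)+6))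
    (t^2*(3*(1-t)-3)) (t^3) 0 le_rfl
  have h2 := (integrableOn_exp_scale (1+t) (by linarith)).const_mul (12*Real.exp (t-1))
  exact (h1.add h2).congr (ae_of_all _ fun y => by
    simp only [Pi.add_apply]
    exact (outer_pointwise t y).symm)

lemma outer_value (t : ℝ) (ht0 : 0 ≤ t) :
    ∫ y in Ioi 0,
      ((1-t+t*y)^3 - 3*(1-t+t*y)^2 + 6*(1-t+t*y) - 6 + 12*Real.exp (-(1-t+t*y))) * Real.exp (-y)
      = 2 * (6 * Real.exp (t - 1) / (1 + t) + t ^ 3 - 1) := by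
  have h1 := integrableOn_poly_exp ((1-t)^3-3*(1-t)^2+6*(1-t)-6) (t*(3*(1-t)^2-6*(1-t)+6))
    (t^2*(3*(1-t)-3)) (t^3) 0 le_rfl
  have h2 := (integrableOn_exp_scale (1+t) (by linarith)).const_mul (12*Real.exp (t-1))
  simp only [outer_pointwise t]
  rw [integral_add h1 h2]
  have hv1 := integral_poly_exp ((1-t)^3-3*(1-t)^2+6*(1-t)-6) (t*(3*(1-t)^2-6*(1-t)+6))
    (t^2*(3*(1-t)-3)) (t^3) 0 le_rfl
  have hv2 : ∫ y in Ioi (0:ℝ), 12*Real.exp (t-1) * Real.exp (-((1+t)*y))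
      = 12*Real.exp (t-1) * (1/(1+t)) := by
    rw [integral_const_mul, integral_exp_scale (1+t) (by linarith)]
  rw [hv1, hv2]
  have ht : (1:ℝ) + t ≠ 0 := by linarith
  field_simp
  simp only [neg_zero, Real.exp_zero]
  ring

lemma A_nonneg (c : ℝ) (hc : 0 ≤ c) :
    0 ≤ c^3 - 3*c^2 + 6*c - 6 + 12 * Real.exp (-c) := by
  rw [← inner_value c hc]
  exact setIntegral_nonneg measurableSet_Ioi fun x _ => by positivity

theorem stmt_13 {Ω : Type} [MeasurableSpace Ω] (P : Measure Ω) [IsProbabilityMeasure P]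
    (E E' : Ω → ℝ) (hE : HasDensity P E expPDF) (hE' : HasDensity P E' expPDF)
    (hind : IndepFun E E' P)
    (t : ℝ) (ht0 : 0 ≤ t) (ht1 : t ≤ 1) :
    (∫ ω, |(E ω - 1) - t * (E' ω - 1)| ^ 3 ∂P) =
      2 * (6 * Real.exp (t - 1) / (1 + t) + t ^ 3 - 1) := by
  obtain ⟨hEm, hEd⟩ := hE
  obtain ⟨hE'm, hE'd⟩ := hE'
  have hfm : Measurable fun x => ENNReal.ofReal (expPDF x) := by
    apply Measurable.ennreal_ofReal
    unfold expPDF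
    exact Measurable.ite (measurableSet_lt measurable_const measurable_id)
      (measurable_id.neg.exp) measurable_const
  set μ : Measure ℝ := volume.withDensity (fun x => ENNReal.ofReal (expPDF x)) with hμdef
  have hμP : IsProbabilityMeasure μ := by
    rw [← hEd]; exact Measure.isProbabilityMeasure_map hEm.aemeasurable
  have hmap : Measure.map (fun ω => (E ω, E' ω)) P = μ.prod μ := by
    have h := (indepFun_iff_map_prod_eq_prod_map_map hEm.aemeasurable hE'm.aemeasurable).mp hind
    rw [hEd, hE'd] at h
    exact h
  have hgm : Measurable fun p : ℝ × ℝ => ENNReal.ofReal (|p.1 - 1 - t * (p.2 - 1)| ^ 3) := by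
    apply Measurable.ennreal_ofReal
    exact ((measurable_fst.sub measurable_const).sub
      ((measurable_snd.sub measurable_const).const_mul t)).abs.pow_const 3
  have hconv : ∀ H : ℝ → ℝ≥0∞, Measurable H →
      ∫⁻ x, H x ∂μ = ∫⁻ x in Ioi 0, H x * ENNReal.ofReal (Real.exp (-x)) := by
    intro H hH
    rw [hμdef, lintegral_withDensity_eq_lintegral_mul _ hfm hH,
      ← lintegral_indicator measurableSet_Ioi]
    refine lintegral_congr fun x => ?_
    by_cases hx : 0 < x
    · simp [indicator, mem_Ioi, hx, expPDF, mul_comm]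
    · simp [indicator, mem_Ioi, hx, expPDF]
  have hmeas : AEStronglyMeasurable (fun ω => |(E ω - 1) - t * (E' ω - 1)| ^ 3) P :=
    (((hEm.sub measurable_const).sub
      ((hE'm.sub measurable_const).const_mul t)).abs.pow_const 3).aestronglyMeasurable
  have hnn : 0 ≤ᵐ[P] fun ω => |(E ω - 1) - t * (E' ω - 1)| ^ 3 :=
    ae_of_all _ fun ω => by positivity
  rw [integral_eq_lintegral_of_nonneg_ae hnn hmeas]
  have hfinal : 0 ≤ 2 * (6 * Real.exp (t - 1) / (1 + t) + t ^ 3 - 1) := by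
    rw [← outer_value t ht0]
    refine setIntegral_nonneg measurableSet_Ioi fun y hy => ?_
    have hy0 : 0 < y := hy
    exact mul_nonneg (A_nonneg _ (by nlinarith)) (Real.exp_nonneg _)
  have key : ∫⁻ ω, ENNReal.ofReal (|E ω - 1 - t * (E' ω - 1)| ^ 3) ∂P
      = ENNReal.ofReal (2 * (6 * Real.exp (t - 1) / (1 + t) + t ^ 3 - 1)) := by
    have h1 : ∫⁻ ω, ENNReal.ofReal (|E ω - 1 - t * (E' ω - 1)| ^ 3) ∂P
        = ∫⁻ p : ℝ × ℝ, ENNReal.ofReal (|p.1 - 1 - t * (p.2 - 1)| ^ 3) ∂(μ.prod μ) := by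
      rw [← hmap, lintegral_map hgm (hEm.prodMk hE'm)]
    rw [h1, lintegral_prod_symm' _ hgm]
    have hinner_m : Measurable fun y : ℝ =>
        ∫⁻ x, ENNReal.ofReal (|x - 1 - t * (y - 1)| ^ 3) ∂μ :=
      Measurable.lintegral_prod_left
        (f := fun x y : ℝ => ENNReal.ofReal (|x - 1 - t * (y - 1)| ^ 3)) hgm
    rw [hconv _ hinner_m]
    have hpt : ∀ y ∈ Ioi (0:ℝ),
        (∫⁻ x, ENNReal.ofReal (|x - 1 - t * (y - 1)| ^ 3) ∂μ) * ENNReal.ofReal (Real.exp (-y))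
        = ENNReal.ofReal (((1-t+t*y)^3 - 3*(1-t+t*y)^2 + 6*(1-t+t*y) - 6
            + 12*Real.exp (-(1-t+t*y))) * Real.exp (-y)) := by
      intro y hy
      have hy0 : 0 < y := hy
      set cc := 1 - t + t*y with hcc
      have hcc0 : 0 ≤ cc := by rw [hcc]; nlinarith
      have harg : ∀ x : ℝ, x - 1 - t*(y-1) = x - cc := fun x => by rw [hcc]; ring
      simp only [harg]
      have hm2 : Measurable fun x : ℝ => ENNReal.ofReal (|x - cc| ^ 3) :=
        (((measurable_id.sub_const cc).abs.pow_const 3)).ennreal_ofReal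
      rw [hconv _ hm2]
      have hcomb : ∀ x : ℝ, ENNReal.ofReal (|x - cc| ^ 3) * ENNReal.ofReal (Real.exp (-x))
          = ENNReal.ofReal (|x - cc| ^ 3 * Real.exp (-x)) :=
        fun x => (ENNReal.ofReal_mul (by positivity)).symm
      simp only [hcomb]
      rw [← ofReal_integral_eq_lintegral_ofReal (inner_integrable cc hcc0)
        (ae_of_all _ fun x => by positivity), inner_value cc hcc0,
        ← ENNReal.ofReal_mul (A_nonneg cc hcc0)]
    rw [setLIntegral_congr_fun measurableSet_Ioi hpt]
    rw [← ofReal_integral_eq_lintegral_ofReal (outer_integrable t ht0)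
      ((ae_restrict_iff' measurableSet_Ioi).mpr (ae_of_all _ fun y hy => by
        have hy0 : 0 < y := hy
        exact mul_nonneg (A_nonneg _ (by nlinarith)) (Real.exp_nonneg _)))]
    rw [outer_value t ht0]
  rw [key, ENNReal.toReal_ofReal hfinal]
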